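/- arXiv:2202.06868 — 3 statements merged into one kernel-verified Lean document; each statement's English description precedes it below -/
import Mathlib

section
/- If a stream s : ℕ → ℕ satisfies s(0) = 0 and, for all k, s(2k+1) = s(k) + 1 and s(2k+2) = s(k) + 1 (the equation s = 0 : ((s [+] repeat 1) ⋈ (s [+] repeat 1))), then s(n) = ⌊log₂(n+1)⌋ for all n. -/
theorem stmt_6 (s : ℕ → ℕ) (h0 : s 0 = 0)
    (h1 : ∀ k, s (2 * k + 1) = s k + 1)
    (h2 : ∀ k, s (2 * k + 2) = s k + 1) :
    ∀ n, s n = Nat.log 2 (n + 1) := by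
  have key : ∀ k, Nat.log 2 (k + 1) + 1 = Nat.log 2 (2 * k + 2) ∧
      Nat.log 2 (k + 1) + 1 = Nat.log 2 (2 * k + 3) := by
    intro k
    have hle : 2 ^ Nat.log 2 (k + 1) ≤ k + 1 := Nat.pow_log_le_self 2 (by omega)
    have hlt : k + 1 < 2 ^ (Nat.log 2 (k + 1) + 1) := Nat.lt_pow_succ_log_self (by norm_num) _
    constructor
    · exact (Nat.log_eq_of_pow_le_of_lt_pow (by rw [pow_succ]; omega)
        (by rw [pow_succ, pow_succ]; omega)).symm
    · exact (Nat.log_eq_of_pow_le_of_lt_pow (by rw [pow_succ]; omega)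
        (by rw [pow_succ, pow_succ]; omega)).symm
  intro n
  induction n using Nat.strong_induction_on with
  | _ n ih =>
    match n with
    | 0 => simpa using h0
    | Nat.succ m =>
      simp only [Nat.succ_eq_add_one]
      rcases Nat.even_or_odd m with ⟨k, hk⟩ | ⟨k, hk⟩
      · subst hk
        rw [show k + k + 1 = 2 * k + 1 by omega, h1 k, ih k (by omega),
          show 2 * k + 1 + 1 = 2 * k + 2 by omega, (key k).1]
      · subst hk
        rw [show 2 * k + 1 + 1 = 2 * k + 2 by omega, h2 k, ih k (by omega),
          show 2 * k + 2 + 1 = 2 * k + 3 by omega, (key k).2]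
end

section
/- If a stream s : ℕ → ℕ satisfies s(0)=2, s(1)=4, s(2)=8, and for all i, s(2i+3) = s(i+2) * s(i) and s(2i+4) = s(i+2) * s(i+1) (the equation s = 2:4:8:((tail(tail s) [*] s) ⋈ (tail(tail s) [*] tail s))), then s(i) = 2^(i+1) for all i. -/
theorem stmt_8 (s : ℕ → ℕ) (h0 : s 0 = 2) (h1 : s 1 = 4) (h2 : s 2 = 8)
    (h3 : ∀ i, s (2 * i + 3) = s (i + 2) * s i)
    (h4 : ∀ i, s (2 * i + 4) = s (i + 2) * s (i + 1)) :
    ∀ i, s i = 2 ^ (i + 1) := by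
  intro n
  induction n using Nat.strong_induction_on with
  | _ n ih =>
    rcases Nat.lt_or_ge n 3 with hn | hn
    · interval_cases n <;> simp [h0, h1, h2]
    · obtain ⟨i, hi⟩ : ∃ i, n = 2 * i + 3 ∨ n = 2 * i + 4 := ⟨(n - 3) / 2, by omega⟩
      rcases hi with rfl | rfl
      · rw [h3 i, ih (i + 2) (by omega), ih i (by omega), ← pow_add]
        ring_nf
      · rw [h4 i, ih (i + 2) (by omega), ih (i + 1) (by omega), ← pow_add]
        ring_nf
end

section
/- If a stream s : ℕ → ℕ satisfies, for all j and i: s(4j) = s(j+1), s(4j+2) = s(j), s(1) = 0, and s(2i+3) = s(i) (the index equations induced by s = (tail s ⋈ s) ⋈ (0 : s)), then s(i) = 0 for all i. In particular this system of index equations has a unique solution, the zero stream. -/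
theorem stmt_14 (s : ℕ → ℕ)
    (h0 : ∀ j, s (4 * j) = s (j + 1))
    (h1 : ∀ j, s (4 * j + 2) = s j)
    (h2 : s 1 = 0)
    (h3 : ∀ i, s (2 * i + 3) = s i) :
    ∀ i, s i = 0 := by
  intro i
  induction i using Nat.strong_induction_on with
  | _ i ih =>
    rcases Nat.lt_or_ge i 2 with hi | hi
    · interval_cases i
      · have := h0 0; simpa [h2] using this
      · exact h2
    · have h4 : i % 4 < 4 := Nat.mod_lt _ (by omega)
      have hdecomp : i = 4 * (i / 4) + i % 4 := (Nat.div_add_mod i 4).symm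
      set j := i / 4 with hj
      interval_cases h : i % 4
      · -- i = 4j, j ≥ 1 since i ≥ 2
        have hj1 : 1 ≤ j := by omega
        have := h0 j
        have heq : 4 * j = i := by omega
        rw [heq] at this
        rw [this]
        exact ih (j + 1) (by omega)
      · -- i = 4j+1 = 2*(2j-1)+3, j ≥ 1
        have hj1 : 1 ≤ j := by omega
        have := h3 (2 * j - 1)
        have heq : 2 * (2 * j - 1) + 3 = i := by omega
        rw [heq] at this
        rw [this]
        exact ih (2 * j - 1) (by omega)
      · have := h1 j
        rw [← hdecomp] at this
        rw [this]
        exact ih j (by omega)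
      · have := h3 (2 * j)
        have heq : 2 * (2 * j) + 3 = i := by omega
        rw [heq] at this
        rw [this]
        exact ih (2 * j) (by omega)
end
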